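/- Let C be a nonzero compact Hermitian operator on a separable Hilbert space and D₁ a compact real diagonal operator such that ‖C + D₁‖ ≤ ‖C + D‖ for every compact real diagonal D. Then both ‖C + D₁‖ and -‖C + D₁‖ belong to the spectrum of C + D₁. -/

import Mathlib

open scoped InnerProductSpace
open ContinuousLinearMap

noncomputable section

variable {H : Type*} [NormedAddCommGroup H] [InnerProductSpace ℂ H] [CompleteSpace H]

/-- The absolute value `|A| = (A^*A)^{1/2}` of an operator. -/
def opAbs (A : H →L[ℂ] H) : H →L[ℂ] H := CFC.sqrt (ContinuousLinearMap.adjoint A * A)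

/-- The trace of an operator computed in the Hilbert basis `e`. -/
def opTrace (e : HilbertBasis ℕ ℂ H) (A : H →L[ℂ] H) : ℂ := ∑' n, ⟪e n, A (e n)⟫_ℂ

/-- The trace norm `‖A‖₁ = tr |A|` computed in the Hilbert basis `e`. -/
def traceNorm (e : HilbertBasis ℕ ℂ H) (A : H →L[ℂ] H) : ℝ :=
  ∑' n, (⟪e n, opAbs A (e n)⟫_ℂ).re

/-- `A` is trace class: the diagonal of `|A|` is summable. -/
def IsTraceClass (e : HilbertBasis ℕ ℂ H) (A : H →L[ℂ] H) : Prop :=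
  Summable fun n => (⟪e n, opAbs A (e n)⟫_ℂ).re

/-- `D` is diagonal in the basis `e` with real diagonal entries. -/
def RealDiag (e : HilbertBasis ℕ ℂ H) (D : H →L[ℂ] H) : Prop :=
  ∀ n, ∃ d : ℝ, D (e n) = (d : ℂ) • e n

/-- Distance from `C` to the compact real diagonal operators, in operator norm. -/
def diagDistK (e : HilbertBasis ℕ ℂ H) (C : H →L[ℂ] H) : ℝ :=
  ⨅ D : {D : H →L[ℂ] H // IsCompactOperator ⇑D ∧ RealDiag e D}, ‖C + (D : H →L[ℂ] H)‖

/-- Positive part `X⁺ = (|X| + X)/2`. -/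
def opPosPart (X : H →L[ℂ] H) : H →L[ℂ] H := (2⁻¹ : ℂ) • (opAbs X + X)

/-- Negative part `X⁻ = (|X| - X)/2`. -/
def opNegPart (X : H →L[ℂ] H) : H →L[ℂ] H := (2⁻¹ : ℂ) • (opAbs X - X)

open scoped Pointwise
set_option linter.unusedSectionVars false

namespace S11

def sK (e : HilbertBasis ℕ ℂ H) (n : ℕ) : Submodule ℂ H := Submodule.span ℂ (e '' Set.Iio n)

instance (e : HilbertBasis ℕ ℂ H) (n : ℕ) : FiniteDimensional ℂ (sK e n) :=
  FiniteDimensional.span_of_finite ℂ ((Set.finite_Iio n).image e)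

def P (e : HilbertBasis ℕ ℂ H) (n : ℕ) : H →L[ℂ] H :=
  (sK e n).subtypeL ∘L Submodule.orthogonalProjectionOnto (sK e n)

lemma P_sa (e : HilbertBasis ℕ ℂ H) (n : ℕ) : IsSelfAdjoint (P e n) :=
  isSelfAdjoint_starProjection (sK e n)

lemma P_norm (e : HilbertBasis ℕ ℂ H) (n : ℕ) : ‖P e n‖ ≤ 1 := by
  refine le_trans (opNorm_comp_le _ _) ?_
  calc ‖(sK e n).subtypeL‖ * ‖(Submodule.orthogonalProjectionOnto (sK e n) : H →L[ℂ] sK e n)‖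
      ≤ 1 * 1 := by
        gcongr
        · exact Submodule.norm_subtypeL_le _
        · exact Submodule.orthogonalProjectionOnto_norm_le _
    _ = 1 := one_mul 1

lemma P_apply_mem (e : HilbertBasis ℕ ℂ H) (n : ℕ) (x : H) : P e n x ∈ sK e n :=
  (Submodule.orthogonalProjectionOnto (sK e n) x).2

lemma P_apply_of_mem (e : HilbertBasis ℕ ℂ H) (n : ℕ) {x : H} (hx : x ∈ sK e n) :
    P e n x = x := by
  simp only [P, comp_apply, Submodule.subtypeL_apply]
  exact Submodule.starProjection_eq_self_iff.2 hx

lemma P_idem (e : HilbertBasis ℕ ℂ H) (n : ℕ) : P e n * P e n = P e n := by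
  ext x
  exact P_apply_of_mem e n (P_apply_mem e n x)

lemma P_min (e : HilbertBasis ℕ ℂ H) (n : ℕ) (y : H) {v : H} (hv : v ∈ sK e n) :
    ‖y - P e n y‖ ≤ ‖y - v‖ := by
  have h : ‖y - ((Submodule.orthogonalProjectionOnto (sK e n) y : sK e n) : H)‖ = ⨅ x : sK e n, ‖y - x‖ :=
    Submodule.starProjection_minimal (U := sK e n) y
  simp only [P, comp_apply, Submodule.subtypeL_apply]
  rw [h]
  exact ciInf_le ⟨0, fun r ⟨w, hw⟩ => hw ▸ norm_nonneg _⟩ (⟨v, hv⟩ : sK e n)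

lemma P_compact (e : HilbertBasis ℕ ℂ H) (n : ℕ) : IsCompactOperator ⇑(P e n) := by
  rw [isCompactOperator_iff_exists_mem_nhds_image_subset_compact]
  refine ⟨Metric.closedBall 0 1, Metric.closedBall_mem_nhds 0 one_pos,
    (sK e n).subtypeL '' Metric.closedBall 0 1, ?_, ?_⟩
  · exact (ProperSpace.isCompact_closedBall (0 : sK e n) 1).image (sK e n).subtypeL.continuous
  · rintro y ⟨x, hx, rfl⟩
    exact ⟨Submodule.orthogonalProjectionOnto (sK e n) x, by
      simpa [Metric.mem_closedBall, dist_zero_right] using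
        (Submodule.orthogonalProjectionOnto (sK e n)).le_opNorm x |>.trans
          (by
            have := Submodule.orthogonalProjectionOnto_norm_le (sK e n)
            have hx' : ‖x‖ ≤ 1 := by simpa [dist_zero_right] using hx
            nlinarith [norm_nonneg x]), rfl⟩

lemma P_diag (e : HilbertBasis ℕ ℂ H) (n : ℕ) : RealDiag e (P e n) := by
  intro m
  by_cases hm : m < n
  · exact ⟨1, by
      rw [P_apply_of_mem e n (Submodule.subset_span ⟨m, hm, rfl⟩)]; simp⟩
  · refine ⟨0, ?_⟩
    simp only [Complex.ofReal_zero, zero_smul]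
    have : e m ∈ (sK e n)ᗮ := by
      rw [Submodule.mem_orthogonal']
      intro u hu
      induction hu using Submodule.span_induction with
      | mem x hx =>
        obtain ⟨i, hi, rfl⟩ := hx
        exact e.orthonormal.2 (fun h => hm (h ▸ hi))
      | zero => simp
      | add x y _ _ hx hy => rw [inner_add_right]; rw [hx, hy, add_zero]
      | smul c x _ hx => rw [inner_smul_right]; rw [hx, mul_zero]
    simp only [P, comp_apply, Submodule.subtypeL_apply]
    rw [Submodule.orthogonalProjectionOnto_apply_of_mem_orthogonal this]
    rfl


lemma ext_of_inner (e : HilbertBasis ℕ ℂ H) {x y : H}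
    (h : ∀ i, ⟪e i, x⟫_ℂ = ⟪e i, y⟫_ℂ) : x = y := by
  apply e.repr.injective
  apply lp.ext
  funext i
  rw [e.repr_apply_apply, e.repr_apply_apply]
  exact h i

lemma realDiag_sa (e : HilbertBasis ℕ ℂ H) {D : H →L[ℂ] H} (h : RealDiag e D) :
    IsSelfAdjoint D := by
  rw [ContinuousLinearMap.isSelfAdjoint_iff']
  ext x
  refine ext_of_inner e fun m => ?_
  rw [ContinuousLinearMap.adjoint_inner_right]
  have key : (innerSL ℂ (D (e m)) : H →L[ℂ] ℂ) = (innerSL ℂ (e m)).comp D := by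
    have hd : Dense (Submodule.span ℂ (Set.range ⇑e) : Set H) := by
      rw [Submodule.dense_iff_topologicalClosure_eq_top]
      exact e.dense_span
    refine ContinuousLinearMap.ext_on hd ?_
    rintro _ ⟨n, rfl⟩
    obtain ⟨dm, hdm⟩ := h m
    obtain ⟨dn, hdn⟩ := h n
    simp only [innerSL_apply_apply, ContinuousLinearMap.comp_apply, hdm, hdn,
      inner_smul_left, inner_smul_right, Complex.conj_ofReal]
    by_cases hmn : m = n
    · subst hmn
      have h0 : (dm : ℂ) • e m = (dn : ℂ) • e m := hdm.symm.trans hdn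
      have hem : e m ≠ 0 := by
        intro h
        have := e.orthonormal.1 m
        rw [h, norm_zero] at this
        exact zero_ne_one this
      have : (dm : ℂ) = dn := smul_left_injective ℂ hem h0
      rw [this]
      try ring
    · rw [e.orthonormal.2 hmn, mul_zero, mul_zero]
  have := DFunLike.congr_fun key x
  simpa using this

lemma realDiag_add {e : HilbertBasis ℕ ℂ H} {D E : H →L[ℂ] H}
    (hD : RealDiag e D) (hE : RealDiag e E) : RealDiag e (D + E) := by
  intro n
  obtain ⟨d, hd⟩ := hD n
  obtain ⟨d', hd'⟩ := hE n
  exact ⟨d + d', by simp [hd, hd', add_smul]⟩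

lemma realDiag_smul {e : HilbertBasis ℕ ℂ H} {D : H →L[ℂ] H} (c : ℝ)
    (hD : RealDiag e D) : RealDiag e ((c : ℂ) • D) := by
  intro n
  obtain ⟨d, hd⟩ := hD n
  exact ⟨c * d, by rw [ContinuousLinearMap.smul_apply, hd, smul_smul, Complex.ofReal_mul]⟩

lemma realDiag_neg {e : HilbertBasis ℕ ℂ H} {D : H →L[ℂ] H}
    (hD : RealDiag e D) : RealDiag e (-D) := by
  intro n
  obtain ⟨d, hd⟩ := hD n
  exact ⟨-d, by simp [hd]⟩

lemma norm_le_of_forall_spectrum (T : H →L[ℂ] H) (hT : IsSelfAdjoint T) {r : ℝ} (hr : 0 ≤ r)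
    (h : ∀ z ∈ spectrum ℂ T, ‖z‖ ≤ r) : ‖T‖ ≤ r := by
  have h1 : spectralRadius ℂ T ≤ ((r.toNNReal : NNReal) : ENNReal) := by
    rw [spectralRadius]
    refine iSup₂_le fun k hk => ENNReal.coe_le_coe.2 ?_
    have h2 : ‖k‖₊ = Real.toNNReal ‖k‖ := by
      rw [← coe_nnnorm, Real.toNNReal_coe]
    rw [h2]
    exact Real.toNNReal_mono (h k hk)
  rw [hT.spectralRadius_eq_nnnorm] at h1
  have h3 := ENNReal.coe_le_coe.1 h1
  have h4 : (‖T‖₊ : ℝ) ≤ (r.toNNReal : ℝ) := NNReal.coe_le_coe.2 h3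
  rwa [coe_nnnorm, Real.coe_toNNReal r hr] at h4




lemma tendsto_P (e : HilbertBasis ℕ ℂ H) (y : H) {ε : ℝ} (hε : 0 < ε) :
    ∃ N : ℕ, ∀ n ≥ N, ‖y - P e n y‖ ≤ ε := by
  have hs := (e.hasSum_repr y).tendsto_sum_nat
  rw [Metric.tendsto_atTop] at hs
  obtain ⟨N, hN⟩ := hs ε hε
  refine ⟨N, fun n hn => ?_⟩
  have hv : ∑ i ∈ Finset.range N, e.repr y i • e i ∈ sK e n := by
    refine Submodule.sum_mem _ fun i hi => Submodule.smul_mem _ _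
      (Submodule.subset_span ⟨i, ?_, rfl⟩)
    exact lt_of_lt_of_le (Finset.mem_range.1 hi) hn
  refine le_trans (P_min e n y hv) ?_
  have h1 := hN N le_rfl
  rw [dist_eq_norm] at h1
  rw [norm_sub_rev]
  exact h1.le

lemma exists_P_comp_small (e : HilbertBasis ℕ ℂ H) {T : H →L[ℂ] H}
    (hT : IsCompactOperator ⇑T) {ε : ℝ} (hε : 0 < ε) :
    ∃ n : ℕ, ‖(1 - P e n) * T‖ ≤ ε := by
  have hK : IsCompact (closure (⇑T '' Metric.closedBall 0 1)) :=
    hT.isCompact_closure_image_closedBall (𝕜₁ := ℂ) 1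
  set K := closure (⇑T '' Metric.closedBall 0 1) with hKdef
  have hTK : ⇑T '' Metric.closedBall 0 1 ⊆ K := subset_closure
  -- finite ε/4-net
  obtain ⟨t, htf, htc⟩ := (Metric.totallyBounded_iff.1 hK.totallyBounded) (ε/4) (by linarith)
  choose N hN using fun y : H => tendsto_P e y (show (0:ℝ) < ε/4 by linarith)
  set n₀ := htf.toFinset.sup N with hn₀
  refine ⟨n₀, ?_⟩
  have hmain : ∀ x : H, ‖x‖ ≤ 1 → ‖T x - P e n₀ (T x)‖ ≤ ε := by
    intro x hx
    have hTx : T x ∈ K := hTK ⟨x, by simpa [Metric.mem_closedBall, dist_zero_right] using hx, rfl⟩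
    obtain ⟨y, hyt, hy⟩ := Set.mem_iUnion₂.1 (htc hTx)
    have hyd : dist (T x) y < ε/4 := Metric.mem_ball.1 hy
    have hyP : ‖y - P e n₀ y‖ ≤ ε/4 := by
      refine hN y n₀ ?_
      exact Finset.le_sup (htf.mem_toFinset.2 hyt)
    have hsplit : T x - P e n₀ (T x) = ((T x - y) - P e n₀ (T x - y)) + (y - P e n₀ y) := by
      simp only [map_sub]
      abel
    rw [hsplit]
    have h2 : ‖(T x - y) - P e n₀ (T x - y)‖ ≤ 2 * ‖T x - y‖ := by
      refine le_trans (norm_sub_le _ _) ?_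
      have := (P e n₀).le_opNorm (T x - y)
      have hPn := P_norm e n₀
      nlinarith [norm_nonneg (T x - y)]
    have h3 : ‖T x - y‖ < ε/4 := by rwa [dist_eq_norm] at hyd
    calc ‖((T x - y) - P e n₀ (T x - y)) + (y - P e n₀ y)‖
        ≤ ‖(T x - y) - P e n₀ (T x - y)‖ + ‖y - P e n₀ y‖ := norm_add_le _ _
      _ ≤ 2 * ‖T x - y‖ + ε/4 := by linarith
      _ ≤ ε := by linarith
  refine ContinuousLinearMap.opNorm_le_bound _ hε.le fun x => ?_
  by_cases hx0 : x = 0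
  · simp [hx0]
  · have hxn : 0 < ‖x‖ := norm_pos_iff.2 hx0
    set u := (‖x‖ : ℝ)⁻¹ • x with hu
    have hun : ‖u‖ ≤ 1 := by
      rw [hu, norm_smul, norm_inv, norm_norm]
      rw [inv_mul_cancel₀ hxn.ne']
    have key := hmain u hun
    have happ : ((1 - P e n₀) * T) x = ‖x‖ • (T u - P e n₀ (T u)) := by
      simp only [ContinuousLinearMap.mul_apply, ContinuousLinearMap.sub_apply,
        ContinuousLinearMap.one_apply, hu, map_smul_of_tower, smul_sub, smul_smul,
        mul_inv_cancel₀ hxn.ne', one_smul]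
    rw [happ, norm_smul, norm_norm]
    calc ‖x‖ * ‖T u - P e n₀ (T u)‖ ≤ ‖x‖ * ε := by
          exact mul_le_mul_of_nonneg_left key hxn.le
      _ = ε * ‖x‖ := mul_comm _ _



lemma main_half (e : HilbertBasis ℕ ℂ H) (C D₁ : H →L[ℂ] H)
    (hcomp : IsCompactOperator ⇑C) (hsa : IsSelfAdjoint C) (hC : C ≠ 0)
    (hD₁c : IsCompactOperator ⇑D₁) (hD₁ : RealDiag e D₁)
    (hmin : ∀ D : H →L[ℂ] H, IsCompactOperator ⇑D → RealDiag e D →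
      ‖C + D₁‖ ≤ ‖C + D‖) :
    ((‖C + D₁‖ : ℂ) ∈ spectrum ℂ (C + D₁)) := by
  haveI : Nontrivial H := by
    by_contra h
    rw [not_nontrivial_iff_subsingleton] at h
    exact hC (by ext x; exact Subsingleton.elim _ _)
  by_contra hmem
  set T := C + D₁ with hTdef
  set a := ‖T‖ with hadef
  have hTsa : IsSelfAdjoint T := hsa.add (realDiag_sa e hD₁)
  have hTc : IsCompactOperator ⇑T := hcomp.add hD₁c
  have hne : (spectrum ℂ T).Nonempty := spectrum.nonempty T
  set δ := Metric.infDist ((a : ℂ)) (spectrum ℂ T) with hδdef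
  have hδ : 0 < δ :=
    ((spectrum.isClosed T).notMem_iff_infDist_pos hne).1 hmem
  have hzre : ∀ z ∈ spectrum ℂ T, z = (z.re : ℂ) ∧ -a ≤ z.re ∧ z.re ≤ a - δ := by
    intro z hz
    have h1 : z = (z.re : ℂ) := hTsa.mem_spectrum_eq_re hz
    have h2 : ‖z‖ ≤ a := spectrum.norm_le_norm_of_mem hz
    have h3 : |z.re| ≤ a := by
      rw [h1, Complex.norm_real, Real.norm_eq_abs] at h2; exact h2
    have h4 : δ ≤ dist ((a : ℂ)) z := Metric.infDist_le_dist_of_mem hz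
    have h5 : dist ((a : ℂ)) z = |a - z.re| := by
      rw [dist_eq_norm]
      nth_rewrite 1 [h1]
      rw [← Complex.ofReal_sub, Complex.norm_real, Real.norm_eq_abs]
    refine ⟨h1, (abs_le.1 h3).1, ?_⟩
    have h6 : z.re ≤ a := (abs_le.1 h3).2
    have h7 : δ ≤ a - z.re := by
      rw [h5, abs_of_nonneg (by linarith)] at h4; exact h4
    linarith
  have hδ2a : δ ≤ 2 * a := by
    obtain ⟨z, hz⟩ := hne
    obtain ⟨h1, h2, h3⟩ := hzre z hz
    linarith
  set c : ℝ := δ / 2 with hcdef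
  set B := T + algebraMap ℂ (H →L[ℂ] H) ((c : ℝ) : ℂ) with hBdef
  have hBsa : IsSelfAdjoint B := by
    refine hTsa.add ?_
    refine IsSelfAdjoint.algebraMap _ ?_
    rw [IsSelfAdjoint, Complex.star_def, Complex.conj_ofReal]
  have hBnorm : ‖B‖ ≤ a - δ/2 := by
    refine norm_le_of_forall_spectrum B hBsa (by linarith) ?_
    intro w hw
    have hw' : w ∈ ({((c : ℝ) : ℂ)} : Set ℂ) + spectrum ℂ T := by
      rw [spectrum.singleton_add_eq]
      rwa [hBdef, add_comm] at hw
    obtain ⟨r, hr, z, hz, rfl⟩ := Set.mem_add.1 hw'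
    rw [Set.mem_singleton_iff] at hr
    subst hr
    obtain ⟨h1, h2, h3⟩ := hzre z hz
    rw [h1, ← Complex.ofReal_add, Complex.norm_real, Real.norm_eq_abs]
    rw [abs_le]
    constructor <;> [skip; skip] <;> simp only [hcdef] <;> linarith
  obtain ⟨n, hn⟩ := exists_P_comp_small e hTc (show (0:ℝ) < δ/8 by linarith)
  set Pn := P e n with hPndef
  have hPn1 : ‖Pn‖ ≤ 1 := P_norm e n
  have h1P : IsSelfAdjoint (1 - Pn) := by
    have h1 : IsSelfAdjoint (1 : H →L[ℂ] H) := by rw [IsSelfAdjoint]; exact star_one _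
    exact h1.sub (P_sa e n)
  have hT1P : ‖T * (1 - Pn)‖ ≤ δ/8 := by
    have hst : T * (1 - Pn) = star ((1 - Pn) * T) := by
      rw [star_mul, hTsa.star_eq, h1P.star_eq]
    rw [hst, norm_star]
    exact hn
  have hPT1P : ‖Pn * (T * (1 - Pn))‖ ≤ δ/8 := by
    refine le_trans (norm_mul_le _ _) ?_
    nlinarith [norm_nonneg (T * (1 - Pn)), norm_nonneg Pn]
  have hPBP : ‖Pn * B * Pn‖ ≤ a - δ/2 := by
    have k1 : ‖Pn * B * Pn‖ ≤ ‖Pn * B‖ * ‖Pn‖ := norm_mul_le _ _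
    have k2 : ‖Pn * B‖ ≤ ‖Pn‖ * ‖B‖ := norm_mul_le _ _
    nlinarith [norm_nonneg B, norm_nonneg Pn, norm_nonneg (Pn * B),
      (by linarith : (0:ℝ) ≤ a - δ/2)]
  have hdec : T + (((c : ℝ)) : ℂ) • Pn = Pn * B * Pn + Pn * (T * (1 - Pn)) + (1 - Pn) * T := by
    have hPP : ∀ x, Pn (Pn x) = Pn x := fun x => P_apply_of_mem e n (P_apply_mem e n x)
    ext x
    simp only [ContinuousLinearMap.add_apply, ContinuousLinearMap.mul_apply,
      ContinuousLinearMap.sub_apply, ContinuousLinearMap.one_apply,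
      ContinuousLinearMap.smul_apply, hBdef, Algebra.algebraMap_eq_smul_one,
      map_add, map_sub, map_smul, hPP, ContinuousLinearMap.one_apply]
    abel
  have hnorm : ‖T + (((c : ℝ)) : ℂ) • Pn‖ ≤ a - δ/4 := by
    rw [hdec]
    have k1 : ‖Pn * B * Pn + Pn * (T * (1 - Pn)) + (1 - Pn) * T‖ ≤
        ‖Pn * B * Pn‖ + ‖Pn * (T * (1 - Pn))‖ + ‖(1 - Pn) * T‖ :=
      le_trans (norm_add_le _ _) (by gcongr; exact norm_add_le _ _)
    have := hn
    linarith
  have hDd : RealDiag e (D₁ + (((c : ℝ)) : ℂ) • Pn) :=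
    realDiag_add hD₁ (realDiag_smul c (P_diag e n))
  have hDc : IsCompactOperator ⇑(D₁ + (((c : ℝ)) : ℂ) • Pn) := by
    have h1 : IsCompactOperator ⇑((((c : ℝ)) : ℂ) • Pn) := by
      have h2 := (P_compact e n).smul (((c : ℝ)) : ℂ)
      rwa [show (((c : ℝ)) : ℂ) • ⇑Pn = ⇑((((c : ℝ)) : ℂ) • Pn) from rfl] at h2
    have h3 := hD₁c.add h1
    rwa [show ⇑D₁ + ⇑((((c : ℝ)) : ℂ) • Pn) = ⇑(D₁ + (((c : ℝ)) : ℂ) • Pn) from rfl] at h3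
  have hfin := hmin _ hDc hDd
  rw [← add_assoc, ← hTdef] at hfin
  have : a ≤ ‖T + (((c : ℝ)) : ℂ) • Pn‖ := hfin
  linarith


end S11

set_option linter.unusedSectionVars true

/-- balanced spectrum property: if `C + D₁` is minimal then
`±‖C + D₁‖ ∈ σ(C + D₁)`. -/
theorem stmt_11 (e : HilbertBasis ℕ ℂ H) (C D₁ : H →L[ℂ] H)
    (hcomp : IsCompactOperator ⇑C) (hsa : IsSelfAdjoint C) (hC : C ≠ 0)
    (hD₁c : IsCompactOperator ⇑D₁) (hD₁ : RealDiag e D₁)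
    (hmin : ∀ D : H →L[ℂ] H, IsCompactOperator ⇑D → RealDiag e D →
      ‖C + D₁‖ ≤ ‖C + D‖) :
    ((‖C + D₁‖ : ℂ) ∈ spectrum ℂ (C + D₁)) ∧
    ((-(‖C + D₁‖ : ℝ) : ℂ) ∈ spectrum ℂ (C + D₁)) := by
  constructor
  · exact S11.main_half e C D₁ hcomp hsa hC hD₁c hD₁ hmin
  · have hCc : IsCompactOperator ⇑(-C) := by
      have := hcomp.neg
      rwa [show -⇑C = ⇑(-C) from rfl] at this
    have hDc : IsCompactOperator ⇑(-D₁) := by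
      have := hD₁c.neg
      rwa [show -⇑D₁ = ⇑(-D₁) from rfl] at this
    have hmin' : ∀ D : H →L[ℂ] H, IsCompactOperator ⇑D → RealDiag e D →
        ‖(-C) + (-D₁)‖ ≤ ‖(-C) + D‖ := by
      intro D hDcomp hDrd
      have h1 : IsCompactOperator ⇑(-D) := by
        have := hDcomp.neg
        rwa [show -⇑D = ⇑(-D) from rfl] at this
      have h2 := hmin (-D) h1 (S11.realDiag_neg hDrd)
      have e1 : (-C) + (-D₁) = -(C + D₁) := by abel
      have e2 : (-C) + D = -(C + (-D)) := by abel
      rw [e1, e2, norm_neg, norm_neg]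
      exact h2
    have h1 := S11.main_half e (-C) (-D₁) hCc hsa.neg (neg_ne_zero.2 hC)
      hDc (S11.realDiag_neg hD₁) hmin'
    have he : (-C) + (-D₁) = -(C + D₁) := by abel
    rw [he, norm_neg] at h1
    rw [← spectrum.neg_eq, Set.mem_neg] at h1
    exact h1
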